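/- Let F = F_Y^Δ ∈ Σ and x ∈ A_F. A sequence (x_n) of points of A converges to x in Ā if and only if a(x_n) → a(x) for every a ∈ Y (where elements of ⟨Y⟩ are viewed as linear forms on A_F via the identification of the dual of A_F with ⟨Y⟩) and (λ₀(Δ) − λ)(x_n) → +∞ for every λ ∈ Λ with [λ₀(Δ) − λ] ⊄ Y. -/

import Mathlib

/-!
Common setup for Werner, "Compactifications of Bruhat-Tits buildings associated to
linear representations":  a finite-dimensional real vector space `A` (the apartment),
a root system `Φ` in the dual space together with a Weyl-group invariant inner
product, a finite Weyl-invariant set `Λ` of (K-)weights, and for every basis `Δ`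
of `Φ` a highest weight `lam0 Δ ∈ Λ`.
-/

open Pointwise Filter Topology Bornology
open scoped Classical

noncomputable section

/-- A set `M` of linear forms is *connected* if the graph with vertex set `M` and an
edge between `m` and `n` iff `inn m n ≠ 0` is connected. -/
def GraphConnected {D : Type*} (inn : D → D → ℝ) (M : Set D) : Prop :=
  ∀ m ∈ M, ∀ n ∈ M,
    Relation.ReflTransGen (fun x y => x ∈ M ∧ y ∈ M ∧ inn x y ≠ 0) m n

/-- The coefficients of `μ` as a linear combination of the elements of `Δ` (chosen
arbitrarily if one exists; it is unique when `Δ` is linearly independent). -/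
noncomputable def coeffs {A : Type*} [AddCommGroup A] [Module ℝ A]
    (Δ : Finset (Module.Dual ℝ A)) (μ : Module.Dual ℝ A) : Module.Dual ℝ A → ℝ :=
  if h : ∃ n : Module.Dual ℝ A → ℝ, μ = ∑ b ∈ Δ, n b • b then h.choose else fun _ => 0

/-- The support `[μ]` of `μ` with respect to the basis `Δ`: the set of elements of `Δ`
whose coefficient in `μ` is nonzero. -/
noncomputable def supp {A : Type*} [AddCommGroup A] [Module ℝ A]
    (Δ : Finset (Module.Dual ℝ A)) (μ : Module.Dual ℝ A) : Finset (Module.Dual ℝ A) :=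
  Δ.filter fun a => coeffs Δ μ a ≠ 0

/-- Raw data: a finite set `Φ` of roots in the dual of `A`, a product `inn` on the dual,
a finite set `Λ` of weights, and a highest weight `lam0 Δ` for every basis `Δ`. -/
structure RootWeightData (A : Type*) [NormedAddCommGroup A] [NormedSpace ℝ A]
    [FiniteDimensional ℝ A] where
  Φ : Finset (Module.Dual ℝ A)
  inn : Module.Dual ℝ A → Module.Dual ℝ A → ℝ
  Λ : Finset (Module.Dual ℝ A)
  lam0 : Finset (Module.Dual ℝ A) → Module.Dual ℝ A

namespace RootWeightData

variable {A : Type*} [NormedAddCommGroup A] [NormedSpace ℝ A] [FiniteDimensional ℝ A]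
variable (S : RootWeightData A)

/-- The reflection associated to the root `a`. -/
def refl (a : Module.Dual ℝ A) : Function.End (Module.Dual ℝ A) :=
  fun x => x - (2 * S.inn x a / S.inn a a) • a

/-- The Weyl group `W`, generated by the reflections in the roots. -/
def weyl : Submonoid (Function.End (Module.Dual ℝ A)) :=
  Submonoid.closure {f | ∃ a ∈ S.Φ, f = S.refl a}

/-- `Δ` is a basis of the root system `Φ`: a linearly independent subset of `Φ` such
that every root is a nonnegative or nonpositive linear combination of `Δ`. -/
def IsBase (Δ : Finset (Module.Dual ℝ A)) : Prop :=
  (↑Δ : Set (Module.Dual ℝ A)) ⊆ (S.Φ : Set (Module.Dual ℝ A)) ∧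
  LinearIndependent ℝ (fun a : (Δ : Set (Module.Dual ℝ A)) => (a : Module.Dual ℝ A)) ∧
  ∀ a ∈ S.Φ,
    (∃ n : Module.Dual ℝ A → ℝ, (∀ b ∈ Δ, 0 ≤ n b) ∧ a = ∑ b ∈ Δ, n b • b) ∨
    (∃ n : Module.Dual ℝ A → ℝ, (∀ b ∈ Δ, 0 ≤ n b) ∧ a = -∑ b ∈ Δ, n b • b)

/-- `Y` is an admissible subset of the basis `Δ`: `Y ⊆ Δ` and `Y ∪ {λ₀(Δ)}` is
connected. -/
def Admissible (Δ Y : Finset (Module.Dual ℝ A)) : Prop :=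
  Y ⊆ Δ ∧ GraphConnected S.inn ((↑Y : Set (Module.Dual ℝ A)) ∪ {S.lam0 Δ})

end RootWeightData

/-- The whole setting of Werner's paper: the data of `RootWeightData`, where `Φ` is a
(crystallographic, possibly non-reduced) root system spanning the dual of `A`, `inn` is
a Weyl-invariant inner product, `Λ` is a finite Weyl-invariant set of weights, and
`lam0` picks, Weyl-equivariantly, a highest weight for each basis, dominating all of
`Λ`; moreover a subset of a basis is admissible iff it is the support of
`λ₀(Δ) - λ` for some weight `λ`. -/
structure RootWeightSystem (A : Type*) [NormedAddCommGroup A] [NormedSpace ℝ A]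
    [FiniteDimensional ℝ A] extends RootWeightData A where
  inn_symm : ∀ x y, inn x y = inn y x
  inn_add_left : ∀ x y z, inn (x + y) z = inn x z + inn y z
  inn_smul_left : ∀ (c : ℝ) (x y), inn (c • x) y = c * inn x y
  inn_pos : ∀ x, x ≠ 0 → 0 < inn x x
  root_ne_zero : ∀ a ∈ Φ, a ≠ (0 : Module.Dual ℝ A)
  neg_mem : ∀ a ∈ Φ, -a ∈ Φ
  refl_mem : ∀ a ∈ Φ, ∀ b ∈ Φ, toRootWeightData.refl a b ∈ Φ
  inn_weyl_invariant :
    ∀ w ∈ toRootWeightData.weyl, ∀ x y, inn (w x) (w y) = inn x y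
  phi_spans : Submodule.span ℝ (Φ : Set (Module.Dual ℝ A)) = ⊤
  exists_base : ∃ Δ, toRootWeightData.IsBase Δ
  base_cover : ∀ x : A, ∃ Δ, toRootWeightData.IsBase Δ ∧ ∀ a ∈ Δ, 0 ≤ a x
  base_weyl : ∀ w ∈ toRootWeightData.weyl, ∀ Δ, toRootWeightData.IsBase Δ →
    toRootWeightData.IsBase (Δ.image (w : Module.Dual ℝ A → Module.Dual ℝ A))
  lam0_mem : ∀ Δ, toRootWeightData.IsBase Δ → lam0 Δ ∈ Λ
  lam0_dominates : ∀ Δ, toRootWeightData.IsBase Δ → ∀ l ∈ Λ,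
    ∃ n : Module.Dual ℝ A → ℝ, (∀ a ∈ Δ, 0 ≤ n a) ∧ lam0 Δ - l = ∑ a ∈ Δ, n a • a
  weight_weyl_invariant : ∀ w ∈ toRootWeightData.weyl, ∀ l ∈ Λ, w l ∈ Λ
  lam0_equivariant : ∀ w ∈ toRootWeightData.weyl, ∀ Δ, toRootWeightData.IsBase Δ →
    lam0 (Δ.image (w : Module.Dual ℝ A → Module.Dual ℝ A)) = w (lam0 Δ)
  integrality : ∀ l ∈ Λ, ∀ a ∈ Φ, ∃ k : ℤ, 2 * inn l a / inn a a = (k : ℝ)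
  admissible_iff_support : ∀ Δ, toRootWeightData.IsBase Δ → ∀ Y ⊆ Δ,
    (toRootWeightData.Admissible Δ Y ↔ ∃ l ∈ Λ, supp Δ (lam0 Δ - l) = Y)

namespace RootWeightSystem

variable {A : Type*} [NormedAddCommGroup A] [NormedSpace ℝ A] [FiniteDimensional ℝ A]
variable (S : RootWeightSystem A)

/-- The face `F_Y^Δ` of the apartment `A` associated to a basis `Δ` and an admissible
subset `Y ⊆ Δ`. -/
def Face (Δ Y : Finset (Module.Dual ℝ A)) : Set A :=
  {x | (∀ a ∈ Y, a x = 0) ∧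
    ∀ l ∈ S.Λ, ¬ supp Δ (S.lam0 Δ - l) ⊆ Y → 0 < (S.lam0 Δ - l) x}

/-- `F` belongs to the collection `Σ` of faces. -/
def IsFace (F : Set A) : Prop :=
  ∃ Δ Y, S.toRootWeightData.IsBase Δ ∧ S.toRootWeightData.Admissible Δ Y ∧
    F = S.Face Δ Y

/-- The collection `Σ` of all faces. -/
def Faces : Type _ := {F : Set A // S.IsFace F}

/-- The relation identifying `(F, u)` and `(F, v)` when `u - v ∈ ⟨F⟩`; the quotient is
the disjoint union `Ā = ⊔_{F ∈ Σ} A/⟨F⟩`. -/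
def AbarRel (p q : S.Faces × A) : Prop :=
  p.1 = q.1 ∧ p.2 - q.2 ∈ Submodule.span ℝ p.1.val

/-- The compactified apartment `Ā = ⊔_{F ∈ Σ} A_F`, `A_F = A/⟨F⟩`. -/
def Abar : Type _ := Quot S.AbarRel

/-- `r_F(u)`, the image of `u ∈ A` in the stratum `A_F` of `Ā`. -/
def mkAbar (F : S.Faces) (u : A) : S.Abar := Quot.mk _ (F, u)

/-- The basic set `Γ_F(U) = ⋃_{F' ⊆ cl F} r_{F'}(U + F)` of `Ā`. -/
def Gamma (F : S.Faces) (U : Set A) : Set S.Abar :=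
  {p | ∃ F' : S.Faces, F'.val ⊆ closure F.val ∧ ∃ u ∈ U + F.val, p = S.mkAbar F' u}

/-- The topology of `Ā`, generated by the sets `Γ_F(U)` for `F ∈ Σ` and `U ⊆ A`
bounded and open. -/
instance : TopologicalSpace S.Abar :=
  TopologicalSpace.generateFrom
    {V : Set S.Abar | ∃ (F : S.Faces) (U : Set A),
      IsOpen U ∧ IsBounded U ∧ V = S.Gamma F U}

/-- `f_Ω(a) = inf {t : Ω ⊆ cl_Ā {z ∈ A : a(z) ≥ -t}} ∈ ℝ ∪ {±∞}`, where `A` is embedded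
in `Ā` as the stratum of the face `F₀ = {0}`. -/
def fOmega (F₀ : S.Faces) (Ω : Set S.Abar) (a : Module.Dual ℝ A) : EReal :=
  sInf ((fun t : ℝ => (t : EReal)) ''
    {t : ℝ | Ω ⊆ closure (S.mkAbar F₀ '' {z : A | -t ≤ a z})})

end RootWeightSystem


variable {A : Type*} [NormedAddCommGroup A] [NormedSpace ℝ A] [FiniteDimensional ℝ A]


section Helpers
set_option linter.unusedSectionVars false

variable {A : Type*} [NormedAddCommGroup A] [NormedSpace ℝ A] [FiniteDimensional ℝ A]

lemma exists_eval (T : Finset (Module.Dual ℝ A))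
    (hli : LinearIndependent ℝ (fun a : (T : Set (Module.Dual ℝ A)) => (a : Module.Dual ℝ A)))
    (g : Module.Dual ℝ A → ℝ) : ∃ x : A, ∀ b ∈ T, b x = g b := by
  have hli' : LinearIndepOn ℝ id (T : Set (Module.Dual ℝ A)) := by
    exact hli
  let B := Module.Basis.extend hli'
  let φ : Module.Dual ℝ (Module.Dual ℝ A) :=
    B.constr ℝ (fun i => g (i : Module.Dual ℝ A))
  refine ⟨(Module.evalEquiv ℝ A).symm φ, fun b hb => ?_⟩
  have hbmem : b ∈ hli'.extend (Set.subset_univ _) :=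
    hli'.subset_extend _ (by exact_mod_cast hb)
  have h1 : b ((Module.evalEquiv ℝ A).symm φ) = φ b :=
    Module.apply_evalEquiv_symm_apply ℝ A b φ
  have h2 : φ (B ⟨b, hbmem⟩) = g b := B.constr_basis ℝ _ _
  rw [h1, ← h2, Module.Basis.extend_apply_self]

lemma coeffs_spec (T : Finset (Module.Dual ℝ A))
    (hli : LinearIndependent ℝ (fun a : (T : Set (Module.Dual ℝ A)) => (a : Module.Dual ℝ A)))
    {μ : Module.Dual ℝ A} {n : Module.Dual ℝ A → ℝ}
    (h : μ = ∑ b ∈ T, n b • b) : ∀ b ∈ T, coeffs T μ b = n b := by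
  have hex : ∃ m : Module.Dual ℝ A → ℝ, μ = ∑ b ∈ T, m b • b := ⟨n, h⟩
  have hspec : μ = ∑ b ∈ T, hex.choose b • b := hex.choose_spec
  intro b hb
  have hzero : ∑ c ∈ T, (n c - hex.choose c) • c = 0 := by
    rw [Finset.sum_congr rfl (fun c _ => sub_smul (n c) (hex.choose c) c),
      Finset.sum_sub_distrib, ← h, ← hspec, sub_self]
  have key : ∀ c ∈ T, n c - hex.choose c = 0 := by
    have := linearIndependent_iff'.mp hli Finset.univ
      (fun i => n i.val - hex.choose i.val) ?_
    · intro c hc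
      exact this ⟨c, by exact_mod_cast hc⟩ (Finset.mem_univ _)
    · rw [← hzero, ← Finset.sum_finset_coe (s := T)
        (f := fun c => (n c - hex.choose c) • c)]
  have := key b hb
  simp only [coeffs, dif_pos hex]
  linarith

end Helpers


section Helpers2
set_option linter.unusedSectionVars false

variable {A : Type*} [NormedAddCommGroup A] [NormedSpace ℝ A] [FiniteDimensional ℝ A]
variable (S : RootWeightSystem A) (Δ Y : Finset (Module.Dual ℝ A))

lemma dual_sum_apply (T : Finset (Module.Dual ℝ A)) (n : Module.Dual ℝ A → ℝ) (x : A) :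
    (∑ b ∈ T, n b • b) x = ∑ b ∈ T, n b * b x := by
  simp [LinearMap.sum_apply, LinearMap.smul_apply, smul_eq_mul]

lemma mem_face (hΔ : S.toRootWeightData.IsBase Δ) (hYΔ : Y ⊆ Δ) {x : A}
    (h0 : ∀ b ∈ Y, b x = 0) (hp : ∀ b ∈ Δ, b ∉ Y → 0 < b x) :
    x ∈ S.Face Δ Y := by
  refine ⟨h0, fun l hl hsupp => ?_⟩
  obtain ⟨n, hn0, hnrep⟩ := S.lam0_dominates Δ hΔ l hl
  have hco := coeffs_spec Δ hΔ.2.1 hnrep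
  obtain ⟨bs, hbsupp, hbY⟩ : ∃ b ∈ supp Δ (S.lam0 Δ - l), b ∉ Y := by
    by_contra hc; push_neg at hc; exact hsupp fun b hb => hc b hb
  obtain ⟨hbΔ, hbne⟩ := Finset.mem_filter.mp hbsupp
  rw [hco bs hbΔ] at hbne
  rw [hnrep, dual_sum_apply]
  refine Finset.sum_pos' (fun b hb => ?_) ⟨bs, hbΔ, ?_⟩
  · by_cases hbY' : b ∈ Y
    · rw [h0 b hbY']; simp
    · exact mul_nonneg (hn0 b hb) (le_of_lt (hp b hb hbY'))
  · exact mul_pos (lt_of_le_of_ne (hn0 bs hbΔ) (Ne.symm hbne)) (hp bs hbΔ hbY)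

lemma exists_mem_face (hΔ : S.toRootWeightData.IsBase Δ) (hYΔ : Y ⊆ Δ) :
    ∃ f, f ∈ S.Face Δ Y ∧ (∀ b ∈ Y, b f = 0) ∧ ∀ b ∈ Δ, b ∉ Y → b f = 1 := by
  obtain ⟨f, hf⟩ := exists_eval Δ hΔ.2.1 (fun b => if b ∈ Y then 0 else 1)
  have h0 : ∀ b ∈ Y, b f = 0 := fun b hb => by rw [hf b (hYΔ hb), if_pos hb]
  have h1 : ∀ b ∈ Δ, b ∉ Y → b f = 1 := fun b hb hb' => by rw [hf b hb, if_neg hb']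
  exact ⟨f, mem_face S Δ Y hΔ hYΔ h0 (fun b hb hb' => by rw [h1 b hb hb']; norm_num), h0, h1⟩

lemma mem_span_face (hΔ : S.toRootWeightData.IsBase Δ) (hYΔ : Y ⊆ Δ)
    {f : A} (hf : f ∈ S.Face Δ Y) {w : A} (hw : ∀ a ∈ Y, a w = 0) :
    w ∈ Submodule.span ℝ (S.Face Δ Y) := by
  classical
  set C := S.Λ.filter (fun l => ¬ supp Δ (S.lam0 Δ - l) ⊆ Y) with hC
  set t : ℝ := if h : C.Nonempty then
      min 1 (C.inf' h (fun l => (S.lam0 Δ - l) f / (|(S.lam0 Δ - l) w| + 1))) else 1 with ht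
  have hfpos : ∀ l ∈ C, 0 < (S.lam0 Δ - l) f := by
    intro l hl
    obtain ⟨hl1, hl2⟩ := Finset.mem_filter.mp hl
    exact hf.2 l hl1 hl2
  have htpos : 0 < t := by
    rw [ht]
    split_ifs with h
    · exact lt_min one_pos ((Finset.lt_inf'_iff h).mpr fun l hl =>
        div_pos (hfpos l hl) (by positivity))
    · exact one_pos
  have hmem : f + t • w ∈ S.Face Δ Y := by
    refine ⟨fun b hb => ?_, fun l hl hsupp => ?_⟩
    · simp [map_add, map_smul, hf.1 b hb, hw b hb]
    · have hlC : l ∈ C := Finset.mem_filter.mpr ⟨hl, hsupp⟩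
      have hCne : C.Nonempty := ⟨l, hlC⟩
      have hle : t ≤ (S.lam0 Δ - l) f / (|(S.lam0 Δ - l) w| + 1) := by
        rw [ht, dif_pos hCne]
        exact le_trans (min_le_right _ _) (Finset.inf'_le _ hlC)
      have habs : t * |(S.lam0 Δ - l) w| < (S.lam0 Δ - l) f := by
        have hd : (0:ℝ) < |(S.lam0 Δ - l) w| + 1 := by positivity
        have h1 : t * (|(S.lam0 Δ - l) w| + 1) ≤ (S.lam0 Δ - l) f := by
          rw [← le_div_iff₀ hd] at *
          exact hle
        nlinarith [htpos]
      have : (S.lam0 Δ - l) (f + t • w) = (S.lam0 Δ - l) f + t * (S.lam0 Δ - l) w := by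
        simp [map_add, map_smul, smul_eq_mul]
      rw [this]
      have := neg_abs_le ((S.lam0 Δ - l) w)
      nlinarith [abs_nonneg ((S.lam0 Δ - l) w), htpos]
  have : w = t⁻¹ • ((f + t • w) - f) := by
    rw [add_sub_cancel_left, smul_smul, inv_mul_cancel₀ (ne_of_gt htpos), one_smul]
  rw [this]
  exact Submodule.smul_mem _ _ (Submodule.sub_mem _
    (Submodule.subset_span hmem) (Submodule.subset_span hf))

lemma span_face_apply_eq_zero {s : A} (hs : s ∈ Submodule.span ℝ (S.Face Δ Y))
    {a : Module.Dual ℝ A} (ha : ∀ z ∈ S.Face Δ Y, a z = 0) : a s = 0 := by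
  have : Submodule.span ℝ (S.Face Δ Y) ≤ LinearMap.ker a := by
    rw [Submodule.span_le]
    intro z hz
    exact LinearMap.mem_ker.mpr (ha z hz)
  exact LinearMap.mem_ker.mp (this hs)

end Helpers2


section Helpers3
set_option linter.unusedSectionVars false

variable {A : Type*} [NormedAddCommGroup A] [NormedSpace ℝ A] [FiniteDimensional ℝ A]
variable (S : RootWeightSystem A) (Δ Y : Finset (Module.Dual ℝ A))

lemma abarRel_equivalence : Equivalence S.AbarRel := by
  constructor
  · intro p; exact ⟨rfl, by simp⟩
  · rintro p q ⟨h1, h2⟩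
    refine ⟨h1.symm, ?_⟩
    rw [← h1]
    have : q.2 - p.2 = -(p.2 - q.2) := by abel
    rw [this]
    exact Submodule.neg_mem _ h2
  · rintro p q r ⟨h1, h2⟩ ⟨h3, h4⟩
    refine ⟨h1.trans h3, ?_⟩
    have : p.2 - r.2 = (p.2 - q.2) + (q.2 - r.2) := by abel
    rw [this]
    exact Submodule.add_mem _ h2 (by rw [h1]; exact h4)

lemma mkAbar_eq_iff (F F' : S.Faces) (u v : A) :
    S.mkAbar F u = S.mkAbar F' v ↔ F = F' ∧ u - v ∈ Submodule.span ℝ F.val := by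
  constructor
  · intro h
    have h' : Quot.mk S.AbarRel (F, u) = Quot.mk S.AbarRel (F', v) := h
    have := (abarRel_equivalence S).eqvGen_iff.mp (Quot.eqvGen_exact h')
    exact this
  · rintro ⟨h1, h2⟩
    exact Quot.sound ⟨h1, h2⟩

lemma mkAbar_zero_eq_iff (F₀ : S.Faces) (hF₀ : F₀.val = ({0} : Set A)) (F' : S.Faces)
    (u v : A) : S.mkAbar F₀ u = S.mkAbar F' v ↔ F₀ = F' ∧ u = v := by
  rw [mkAbar_eq_iff]
  have hspan : Submodule.span ℝ F₀.val = ⊥ := by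
    rw [hF₀]
    exact Submodule.span_zero_singleton ℝ
  rw [hspan]
  simp [sub_eq_zero]

lemma nonneg_on_closure {G : Set A} {ψ : Module.Dual ℝ A} (h : ∀ z ∈ G, 0 < ψ z) :
    ∀ z ∈ closure G, 0 ≤ ψ z := by
  have hc : Continuous ψ := LinearMap.continuous_of_finiteDimensional ψ
  have hcl : IsClosed {z : A | 0 ≤ ψ z} := isClosed_le continuous_const hc
  intro z hz
  exact hcl.closure_subset_iff.mpr (fun w hw => (h w hw).le) hz

lemma zero_on_closure {G : Set A} {ψ : Module.Dual ℝ A} (h : ∀ z ∈ G, ψ z = 0) :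
    ∀ z ∈ closure G, ψ z = 0 := by
  have hc : Continuous ψ := LinearMap.continuous_of_finiteDimensional ψ
  have hcl : IsClosed {z : A | ψ z = 0} := isClosed_eq hc continuous_const
  intro z hz
  exact hcl.closure_subset_iff.mpr (fun w hw => h w hw) hz

lemma zero_mem_closure_face {g : A} (hg : g ∈ S.Face Δ Y) :
    (0 : A) ∈ closure (S.Face Δ Y) := by
  have hmem : ∀ n : ℕ, (1 / ((n : ℝ) + 1)) • g ∈ S.Face Δ Y := by
    intro n
    have hpos : (0:ℝ) < 1 / ((n : ℝ) + 1) := by positivity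
    refine ⟨fun b hb => ?_, fun l hl hs => ?_⟩
    · rw [map_smul, hg.1 b hb, smul_zero]
    · rw [map_smul, smul_eq_mul]
      exact mul_pos hpos (hg.2 l hl hs)
  have htend : Filter.Tendsto (fun n : ℕ => (1 / ((n : ℝ) + 1)) • g) Filter.atTop (nhds 0) := by
    have := tendsto_one_div_add_atTop_nhds_zero_nat (𝕜 := ℝ)
    have h2 := this.smul_const g
    simpa using h2
  exact mem_closure_of_tendsto htend (Filter.Eventually.of_forall hmem)

lemma mem_span_of_vanishing {b : Module.Dual ℝ A}
    (hb : ∀ z : A, (∀ a ∈ Y, a z = 0) → b z = 0) :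
    b ∈ Submodule.span ℝ (Y : Set (Module.Dual ℝ A)) := by
  set p := Submodule.span ℝ (Y : Set (Module.Dual ℝ A)) with hp
  have hmem : b ∈ p.dualCoannihilator.dualAnnihilator := by
    rw [Submodule.mem_dualAnnihilator]
    intro z hz
    rw [Submodule.mem_dualCoannihilator] at hz
    exact hb z fun a ha => hz a (Submodule.subset_span ha)
  rwa [Subspace.dualCoannihilator_dualAnnihilator_eq] at hmem

lemma mu_mem_span_of_supp_subset (hΔ : S.toRootWeightData.IsBase Δ) {l : Module.Dual ℝ A}
    (hl : l ∈ S.Λ) (hsupp : supp Δ (S.lam0 Δ - l) ⊆ Y) :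
    S.lam0 Δ - l ∈ Submodule.span ℝ (Y : Set (Module.Dual ℝ A)) := by
  obtain ⟨n, hn0, hrep⟩ := S.lam0_dominates Δ hΔ l hl
  have hco := coeffs_spec Δ hΔ.2.1 hrep
  rw [hrep]
  refine Submodule.sum_mem _ fun b hb => ?_
  by_cases hnb : n b = 0
  · rw [hnb, zero_smul]; exact Submodule.zero_mem _
  · have hbsupp : b ∈ supp Δ (S.lam0 Δ - l) :=
      Finset.mem_filter.mpr ⟨hb, by rw [hco b hb]; exact hnb⟩
    exact Submodule.smul_mem _ _ (Submodule.subset_span (hsupp hbsupp))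

lemma tendsto_of_mem_span {x : ℕ → A} {u₀ : A}
    (hx : ∀ a ∈ Y, Filter.Tendsto (fun n => a (x n)) Filter.atTop (nhds (a u₀)))
    {b : Module.Dual ℝ A} (hb : b ∈ Submodule.span ℝ (Y : Set (Module.Dual ℝ A))) :
    Filter.Tendsto (fun n => b (x n)) Filter.atTop (nhds (b u₀)) := by
  let T : Submodule ℝ (Module.Dual ℝ A) :=
    { carrier := {φ | Filter.Tendsto (fun n => φ (x n)) Filter.atTop (nhds (φ u₀))}
      add_mem' := fun hφ hχ => by
        simpa [LinearMap.add_apply] using hφ.add hχ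
      zero_mem' := by simpa using tendsto_const_nhds
      smul_mem' := fun c φ hφ => by
        simpa [LinearMap.smul_apply, smul_eq_mul] using hφ.const_mul c }
  have hle : Submodule.span ℝ (Y : Set (Module.Dual ℝ A)) ≤ T :=
    Submodule.span_le.mpr fun a ha => hx a ha
  exact hle hb

lemma face_nonneg_eval (hΔ : S.toRootWeightData.IsBase Δ) {f : A} (hfF : f ∈ S.Face Δ Y)
    {ψ : Module.Dual ℝ A} (hψ : ∀ z ∈ S.Face Δ Y, 0 ≤ ψ z) {q : A}
    (hq0 : ∀ a ∈ Y, a q = 0)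
    (hqm : ∀ m ∈ S.Λ, ¬ supp Δ (S.lam0 Δ - m) ⊆ Y → 0 ≤ (S.lam0 Δ - m) q) :
    0 ≤ ψ q := by
  have hmem : ∀ t : ℝ, 0 < t → q + t • f ∈ S.Face Δ Y := by
    intro t ht
    refine ⟨fun b hb => ?_, fun m hm hs => ?_⟩
    · rw [map_add, map_smul, hq0 b hb, hfF.1 b hb, smul_zero, add_zero]
    · rw [map_add, map_smul, smul_eq_mul]
      have h1 := hqm m hm hs
      have h2 := hfF.2 m hm hs
      nlinarith
  by_contra hneg
  push_neg at hneg
  set t : ℝ := -ψ q / (2 * (|ψ f| + 1)) with htdef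
  have ht : 0 < t := by
    apply div_pos (by linarith) (by positivity)
  have h1 : 0 ≤ ψ (q + t • f) := hψ _ (hmem t ht)
  rw [map_add, map_smul, smul_eq_mul] at h1
  have h2 : ψ f ≤ |ψ f| := le_abs_self _
  have h3 : t * ψ f ≤ t * (|ψ f| + 1) := by nlinarith
  have h4 : t * (|ψ f| + 1) = -ψ q / 2 := by
    rw [htdef]; field_simp
  nlinarith

end Helpers3


section Helpers4
set_option linter.unusedSectionVars false

variable {A : Type*} [NormedAddCommGroup A] [NormedSpace ℝ A] [FiniteDimensional ℝ A]
variable (S : RootWeightSystem A)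

lemma gamma_open (F : S.Faces) (U : Set A) (hU : IsOpen U) (hB : IsBounded U) :
    IsOpen (S.Gamma F U) :=
  TopologicalSpace.isOpen_generateFrom_of_mem ⟨F, U, hU, hB, rfl⟩

lemma tendsto_abar (F : S.Faces) (u₀ : A) (z : ℕ → S.Abar) :
    Filter.Tendsto z Filter.atTop (nhds (S.mkAbar F u₀)) ↔
      ∀ (G : S.Faces) (U : Set A), IsOpen U → IsBounded U →
        S.mkAbar F u₀ ∈ S.Gamma G U → ∀ᶠ n in Filter.atTop, z n ∈ S.Gamma G U := by
  constructor
  · intro h G U hU hB hmem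
    exact h ((gamma_open S G U hU hB).mem_nhds hmem)
  · intro h
    have hn : nhds (S.mkAbar F u₀) =
        ⨅ s ∈ {s | S.mkAbar F u₀ ∈ s ∧ s ∈ {V : Set S.Abar | ∃ (G : S.Faces) (U : Set A),
          IsOpen U ∧ IsBounded U ∧ V = S.Gamma G U}}, Filter.principal s :=
      TopologicalSpace.nhds_generateFrom
    rw [hn]
    refine Filter.tendsto_iInf.mpr fun s => Filter.tendsto_iInf.mpr fun hs =>
      Filter.tendsto_principal.mpr ?_
    obtain ⟨hmem, G, U, hU, hB, rfl⟩ := hs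
    exact h G U hU hB hmem

end Helpers4

set_option maxHeartbeats 2000000 in
/-- Let `F = F_Y^Δ ∈ Σ` and `x ∈ A_F` (with lift `u₀ ∈ A`).  A
sequence `(x_n)` of points of `A` (embedded in `Ā` via the stratum of the face
`F₀ = {0}`) converges to `x` iff `a(x_n) → a(x)` for all `a ∈ Y` and
`(λ₀(Δ) - λ)(x_n) → ∞` for every `λ ∈ Λ` with `[λ₀(Δ) - λ] ⊄ Y`. -/
theorem tendsto_abar_iff (S : RootWeightSystem A)
    (Δ Y : Finset (Module.Dual ℝ A))
    (hΔ : S.toRootWeightData.IsBase Δ) (hY : S.toRootWeightData.Admissible Δ Y)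
    (F : S.Faces) (hF : F.val = S.Face Δ Y)
    (F₀ : S.Faces) (hF₀ : F₀.val = ({0} : Set A))
    (u₀ : A) (x : ℕ → A) :
    Filter.Tendsto (fun n => S.mkAbar F₀ (x n)) Filter.atTop
        (nhds (S.mkAbar F u₀)) ↔
      ((∀ a ∈ Y, Filter.Tendsto (fun n => a (x n)) Filter.atTop (nhds (a u₀))) ∧
        ∀ l ∈ S.Λ, ¬ supp Δ (S.lam0 Δ - l) ⊆ Y →
          Filter.Tendsto (fun n => (S.lam0 Δ - l) (x n)) Filter.atTop
            Filter.atTop) := by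
  classical
  have hYΔ : Y ⊆ Δ := hY.1
  obtain ⟨f, hfF, hf0, hf1⟩ := exists_mem_face S Δ Y hΔ hYΔ
  have hfval : f ∈ F.val := by rw [hF]; exact hfF
  constructor
  · intro h
    constructor
    · -- convergence of a ∈ Y
      intro a ha
      refine Metric.tendsto_atTop.mpr fun ε hε => ?_
      set aL := LinearMap.toContinuousLinearMap a with haL
      set Ca : ℝ := ‖aL‖ + 1 with hCa
      have hCapos : 0 < Ca := by positivity
      have habound : ∀ z : A, |a z| ≤ Ca * ‖z‖ := by
        intro z
        have h1 : ‖aL z‖ ≤ ‖aL‖ * ‖z‖ := aL.le_opNorm z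
        have h2 : aL z = a z := rfl
        rw [h2] at h1
        have : ‖aL‖ * ‖z‖ ≤ Ca * ‖z‖ := by
          apply mul_le_mul_of_nonneg_right _ (norm_nonneg z)
          rw [hCa]; linarith
        calc |a z| = ‖a z‖ := (Real.norm_eq_abs _).symm
          _ ≤ ‖aL‖ * ‖z‖ := h1
          _ ≤ Ca * ‖z‖ := this
      set δ : ℝ := ε / Ca with hδ
      have hδpos : 0 < δ := div_pos hε hCapos
      set U : Set A := Metric.ball (u₀ - f) δ with hU
      have hmemΓ : S.mkAbar F u₀ ∈ S.Gamma F U := by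
        refine ⟨F, subset_closure, u₀, Set.mem_add.mpr
          ⟨u₀ - f, Metric.mem_ball_self hδpos, f, hfval, by abel⟩, rfl⟩
      have hEv := (tendsto_abar S F u₀ _).mp h F U Metric.isOpen_ball Metric.isBounded_ball hmemΓ
      rw [Filter.eventually_atTop] at hEv
      obtain ⟨N, hN⟩ := hEv
      refine ⟨N, fun n hn => ?_⟩
      obtain ⟨F', hF'cl, u, huU, hequ⟩ := hN n hn
      obtain ⟨hFF', hxu⟩ := (mkAbar_zero_eq_iff S F₀ hF₀ F' (x n) u).mp hequ
      rw [← hxu] at huU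
      obtain ⟨v, hv, gg, hgg, hsum⟩ := Set.mem_add.mp huU
      have hggF : gg ∈ S.Face Δ Y := by rw [hF] at hgg; exact hgg
      have hxn : x n = v + gg := hsum.symm
      have hagg : a gg = 0 := hggF.1 a ha
      have haf : a f = 0 := hf0 a ha
      have hdistv : ‖v - (u₀ - f)‖ < δ := by
        have := Metric.mem_ball.mp hv
        rwa [dist_eq_norm] at this
      have hkey : a (x n) - a u₀ = a (v - (u₀ - f)) := by
        rw [hxn, map_add, map_sub, map_sub]
        linarith [hagg, haf]
      rw [Real.dist_eq, hkey]
      calc |a (v - (u₀ - f))| ≤ Ca * ‖v - (u₀ - f)‖ := habound _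
        _ < Ca * δ := by exact mul_lt_mul_of_pos_left hdistv hCapos
        _ = ε := by rw [hδ]; field_simp
    · -- divergence
      intro l hl hsuppl
      refine Filter.tendsto_atTop.mpr fun T => ?_
      set μ : Module.Dual ℝ A := S.lam0 Δ - l with hμ
      obtain ⟨xs, hxs⟩ := exists_eval Δ hΔ.2.1 (fun b => if b ∈ Y then 0 else (-1 : ℝ))
      have hxs0 : ∀ b ∈ Y, b xs = 0 := fun b hb => by
        rw [hxs b (hYΔ hb), if_pos hb]
      have hxsm : ∀ b ∈ Δ, b ∉ Y → b xs = -1 := fun b hb hb' => by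
        rw [hxs b hb, if_neg hb']
      have hμxs : μ xs < 0 := by
        obtain ⟨n, hn0, hrep⟩ := S.lam0_dominates Δ hΔ l hl
        have hco := coeffs_spec Δ hΔ.2.1 hrep
        obtain ⟨bs, hbsupp, hbY⟩ : ∃ b ∈ supp Δ (S.lam0 Δ - l), b ∉ Y := by
          by_contra hc; push_neg at hc; exact hsuppl fun b hb => hc b hb
        obtain ⟨hbΔ, hbne⟩ := Finset.mem_filter.mp hbsupp
        rw [hco bs hbΔ] at hbne
        rw [hμ, hrep, dual_sum_apply]
        have hlt : ∑ b ∈ Δ, n b * b xs < ∑ b ∈ Δ, (0 : ℝ) := by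
          refine Finset.sum_lt_sum (fun b hb => ?_) ⟨bs, hbΔ, ?_⟩
          · by_cases hbY' : b ∈ Y
            · rw [hxs0 b hbY']; simp
            · rw [hxsm b hb hbY']
              nlinarith [hn0 b hb]
          · rw [hxsm bs hbΔ hbY]
            have : 0 < n bs := lt_of_le_of_ne (hn0 bs hbΔ) (Ne.symm hbne)
            nlinarith
        simpa using hlt
      set c : ℝ := -μ xs with hc
      have hcpos : 0 < c := by rw [hc]; linarith
      set μL := LinearMap.toContinuousLinearMap μ with hμL
      set Cμ : ℝ := ‖μL‖ + 1 with hCμ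
      have hCμpos : 0 < Cμ := by positivity
      have hμbound : ∀ z : A, |μ z| ≤ Cμ * ‖z‖ := by
        intro z
        have h1 : ‖μL z‖ ≤ ‖μL‖ * ‖z‖ := μL.le_opNorm z
        have h2 : μL z = μ z := rfl
        rw [h2] at h1
        calc |μ z| = ‖μ z‖ := (Real.norm_eq_abs _).symm
          _ ≤ ‖μL‖ * ‖z‖ := h1
          _ ≤ Cμ * ‖z‖ := by
              apply mul_le_mul_of_nonneg_right _ (norm_nonneg z)
              rw [hCμ]; linarith
      have hxs_span : xs ∈ Submodule.span ℝ F.val := by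
        rw [hF]; exact mem_span_face S Δ Y hΔ hYΔ hfF hxs0
      set M : ℝ := max 0 ((T + Cμ + μ f - μ u₀ + 1) / c) with hM
      set sv : A := M • xs with hsv
      have hsv_span : sv ∈ Submodule.span ℝ F.val := Submodule.smul_mem _ _ hxs_span
      have hμsv : μ sv = -(M * c) := by
        rw [hsv, map_smul, smul_eq_mul, hc]; ring
      set ctr : A := u₀ - sv - f with hctr
      set U : Set A := Metric.ball ctr 1 with hU
      have hmemΓ : S.mkAbar F u₀ ∈ S.Gamma F U := by
        refine ⟨F, subset_closure, u₀ - sv, Set.mem_add.mpr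
          ⟨ctr, Metric.mem_ball_self one_pos, f, hfval, by rw [hctr]; abel⟩, ?_⟩
        refine (mkAbar_eq_iff S F F u₀ (u₀ - sv)).mpr ⟨rfl, ?_⟩
        have : u₀ - (u₀ - sv) = sv := by abel
        rw [this]; exact hsv_span
      have hEv := (tendsto_abar S F u₀ _).mp h F U Metric.isOpen_ball Metric.isBounded_ball hmemΓ
      refine hEv.mono fun n hn => ?_
      obtain ⟨F', hF'cl, u, huU, hequ⟩ := hn
      obtain ⟨hFF', hxu⟩ := (mkAbar_zero_eq_iff S F₀ hF₀ F' (x n) u).mp hequ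
      rw [← hxu] at huU
      obtain ⟨v, hv, gg, hgg, hsum⟩ := Set.mem_add.mp huU
      have hggF : gg ∈ S.Face Δ Y := by rw [hF] at hgg; exact hgg
      have hxn : x n = v + gg := hsum.symm
      have hμgg : 0 < μ gg := hggF.2 l hl hsuppl
      have hdistv : ‖v - ctr‖ < 1 := by
        have := Metric.mem_ball.mp hv
        rwa [dist_eq_norm] at this
      have hμv : μ ctr - Cμ ≤ μ v := by
        have h1 : |μ (v - ctr)| ≤ Cμ * ‖v - ctr‖ := hμbound _
        have h2 : Cμ * ‖v - ctr‖ ≤ Cμ := by nlinarith [norm_nonneg (v - ctr)]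
        have h3 : μ (v - ctr) = μ v - μ ctr := map_sub μ v ctr
        have h4 := abs_le.mp h1
        linarith [h4.1]
      have hμctr : μ ctr = μ u₀ + M * c - μ f := by
        rw [hctr, map_sub, map_sub, hμsv]; ring
      have hMc : T + Cμ + μ f - μ u₀ + 1 ≤ M * c := by
        have hM1 : (T + Cμ + μ f - μ u₀ + 1) / c ≤ M := le_max_right _ _
        rw [div_le_iff₀ hcpos] at hM1
        exact hM1
      have : μ (x n) = μ v + μ gg := by rw [hxn, map_add]
      linarith
  · rintro ⟨h1, h2⟩
    refine (tendsto_abar S F u₀ _).mpr fun G U hUopen hUbdd hmem => ?_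
    obtain ⟨F'', hF''cl, u, huU, hequ⟩ := hmem
    obtain ⟨hFF'', hdiff⟩ := (mkAbar_eq_iff S F F'' u₀ u).mp hequ
    subst hFF''
    obtain ⟨Δ', Y', hΔ', hY', hGface⟩ := G.property
    have hY'Δ' : Y' ⊆ Δ' := hY'.1
    obtain ⟨w, hwU, g, hgG, hwg⟩ := Set.mem_add.mp huU
    have hgface : g ∈ S.Face Δ' Y' := by rw [hGface] at hgG; exact hgG
    set sv : A := u₀ - u with hsv
    have hsspan : sv ∈ Submodule.span ℝ (S.Face Δ Y) := by rw [← hF]; exact hdiff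
    have hFsub : S.Face Δ Y ⊆ closure (S.Face Δ' Y') := by
      rw [← hF, ← hGface]; exact hF''cl
    have hbvan : ∀ b ∈ Y', ∀ z ∈ S.Face Δ Y, b z = 0 := fun b hb z hz =>
      zero_on_closure (fun w' hw' => hw'.1 b hb) z (hFsub hz)
    have hY'span : ∀ b ∈ Y', b ∈ Submodule.span ℝ (Y : Set (Module.Dual ℝ A)) := by
      intro b hb
      refine mem_span_of_vanishing Y fun z hz => ?_
      exact span_face_apply_eq_zero S Δ Y (mem_span_face S Δ Y hΔ hYΔ hfF hz) (hbvan b hb)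
    have hs0 : ∀ a ∈ Y, a sv = 0 := fun a ha =>
      span_face_apply_eq_zero S Δ Y hsspan (fun z hz => hz.1 a ha)
    have hs0' : ∀ b ∈ Y', b sv = 0 := fun b hb =>
      span_face_apply_eq_zero S Δ Y hsspan (hbvan b hb)
    set d : ℕ → A := fun n => x n - u₀ + sv with hd
    have hdY : ∀ a ∈ Y, Filter.Tendsto (fun n => a (d n)) Filter.atTop (nhds 0) := by
      intro a ha
      have ht := (h1 a ha).sub (tendsto_const_nhds (x := a u₀))
      rw [sub_self] at ht
      have heq : (fun n => a (x n) - a u₀) = fun n => a (d n) := by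
        funext n
        simp only [hd, map_add, map_sub, hs0 a ha, add_zero]
      rwa [heq] at ht
    have hdY' : ∀ b ∈ Y', Filter.Tendsto (fun n => b (d n)) Filter.atTop (nhds 0) := by
      intro b hb
      have hbs := tendsto_of_mem_span Y h1 (hY'span b hb)
      have ht := hbs.sub (tendsto_const_nhds (x := b u₀))
      rw [sub_self] at ht
      have heq : (fun n => b (x n) - b u₀) = fun n => b (d n) := by
        funext n
        simp only [hd, map_add, map_sub, hs0' b hb, add_zero]
      rwa [heq] at ht
    have hliY : LinearIndependent ℝ
        (fun a : (Y : Set (Module.Dual ℝ A)) => (a : Module.Dual ℝ A)) :=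
      LinearIndepOn.mono (v := id) hΔ.2.1 (Finset.coe_subset.mpr hYΔ)
    have hliY' : LinearIndependent ℝ
        (fun a : (Y' : Set (Module.Dual ℝ A)) => (a : Module.Dual ℝ A)) :=
      LinearIndepOn.mono (v := id) hΔ'.2.1 (Finset.coe_subset.mpr hY'Δ')
    have hEex : ∀ b' : Module.Dual ℝ A, ∃ e : A, b' ∈ Y' →
        ∀ b ∈ Y', b e = if b = b' then 1 else 0 := by
      intro b'
      by_cases hb' : b' ∈ Y'
      · obtain ⟨e, he⟩ := exists_eval Y' hliY' (fun b => if b = b' then 1 else 0)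
        exact ⟨e, fun _ => he⟩
      · exact ⟨0, fun hcon => absurd hcon hb'⟩
    choose E hE using hEex
    have hEAex : ∀ a' : Module.Dual ℝ A, ∃ e : A, a' ∈ Y →
        ∀ a ∈ Y, a e = if a = a' then 1 else 0 := by
      intro a'
      by_cases ha' : a' ∈ Y
      · obtain ⟨e, he⟩ := exists_eval Y hliY (fun a => if a = a' then 1 else 0)
        exact ⟨e, fun _ => he⟩
      · exact ⟨0, fun hcon => absurd hcon ha'⟩
    choose EA hEA using hEAex
    set tt : ℕ → A := fun n => ∑ b ∈ Y', (b (d n)) • E b with htt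
    set ee : ℕ → A := fun n => ∑ a ∈ Y, (a (d n)) • EA a with hee
    set pp : ℕ → A := fun n => d n - ee n with hpp
    have httend : Filter.Tendsto tt Filter.atTop (nhds 0) := by
      have := tendsto_finset_sum Y' (fun b hb => (hdY' b hb).smul_const (E b))
      simpa [htt] using this
    have heetend : Filter.Tendsto ee Filter.atTop (nhds 0) := by
      have := tendsto_finset_sum Y (fun a ha => (hdY a ha).smul_const (EA a))
      simpa [hee] using this
    have hbt : ∀ n, ∀ b ∈ Y', b (tt n) = b (d n) := by
      intro n b hb
      simp only [htt, map_sum, map_smul, smul_eq_mul]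
      have hterm : ∀ c ∈ Y', c (d n) * b (E c) = if b = c then c (d n) else 0 := by
        intro c hc
        rw [hE c hc b hb]
        split_ifs <;> simp
      rw [Finset.sum_congr rfl hterm, Finset.sum_ite_eq Y' b (fun c => c (d n)), if_pos hb]
    have hap : ∀ n, ∀ a ∈ Y, a (pp n) = 0 := by
      intro n a ha
      simp only [hpp, map_sub]
      have heq : a (ee n) = a (d n) := by
        simp only [hee, map_sum, map_smul, smul_eq_mul]
        have hterm : ∀ c ∈ Y, c (d n) * a (EA c) = if a = c then c (d n) else 0 := by
          intro c hc
          rw [hEA c hc a ha]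
          split_ifs <;> simp
        rw [Finset.sum_congr rfl hterm, Finset.sum_ite_eq Y a (fun c => c (d n)), if_pos ha]
      rw [heq, sub_self]
    have hcont : ∀ ψ : Module.Dual ℝ A, ∀ z : ℕ → A,
        Filter.Tendsto z Filter.atTop (nhds 0) →
        Filter.Tendsto (fun n => ψ (z n)) Filter.atTop (nhds 0) := by
      intro ψ z hz
      have hψc : Continuous ψ := LinearMap.continuous_of_finiteDimensional ψ
      have := (hψc.tendsto 0).comp hz
      simpa [Function.comp_def] using this
    have hPm : ∀ᶠ n in Filter.atTop, ∀ m ∈ S.Λ,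
        ¬ supp Δ (S.lam0 Δ - m) ⊆ Y → 0 ≤ (S.lam0 Δ - m) (pp n) := by
      rw [Filter.eventually_all_finset]
      intro m hm
      by_cases hsm : ¬ supp Δ (S.lam0 Δ - m) ⊆ Y
      · set ν := S.lam0 Δ - m with hν
        have hνe := hcont ν ee heetend
        have hx_big : ∀ᶠ n in Filter.atTop, ν u₀ - ν sv + 1 ≤ ν (x n) :=
          (h2 m hm hsm).eventually_ge_atTop _
        have he_small : ∀ᶠ n in Filter.atTop, ν (ee n) < 1 :=
          hνe.eventually_lt_const one_pos
        filter_upwards [hx_big, he_small] with n hb hsmall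
        intro _
        have hval : ν (pp n) = ν (x n) - ν u₀ + ν sv - ν (ee n) := by
          simp only [hpp, hd, map_sub, map_add]
        linarith
      · push_neg at hsm
        exact Filter.Eventually.of_forall fun n hcon => absurd hsm hcon
    have hψl : ∀ᶠ n in Filter.atTop, ∀ l' ∈ S.Λ,
        ¬ supp Δ' (S.lam0 Δ' - l') ⊆ Y' → 0 < (S.lam0 Δ' - l') (g + d n - tt n) := by
      rw [Filter.eventually_all_finset]
      intro l' hl'
      by_cases hsl' : ¬ supp Δ' (S.lam0 Δ' - l') ⊆ Y'
      · set ψ := S.lam0 Δ' - l' with hψ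
        have hψg : 0 < ψ g := hgface.2 l' hl' hsl'
        have hψF : ∀ z ∈ S.Face Δ Y, 0 ≤ ψ z := fun z hz =>
          nonneg_on_closure (fun w' hw' => hw'.2 l' hl' hsl') z (hFsub hz)
        have hψp : ∀ᶠ n in Filter.atTop, 0 ≤ ψ (pp n) :=
          hPm.mono fun n hn => face_nonneg_eval S Δ Y hΔ hfF hψF (hap n) hn
        have hψe := hcont ψ ee heetend
        have hψt := hcont ψ tt httend
        have hpos4 : 0 < ψ g / 4 := by linarith
        have he4 : ∀ᶠ n in Filter.atTop, |ψ (ee n)| < ψ g / 4 := by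
          have habs : Filter.Tendsto (fun n => |ψ (ee n)|) Filter.atTop (nhds 0) := by
            simpa using hψe.abs
          exact habs.eventually_lt_const hpos4
        have ht4 : ∀ᶠ n in Filter.atTop, |ψ (tt n)| < ψ g / 4 := by
          have habs : Filter.Tendsto (fun n => |ψ (tt n)|) Filter.atTop (nhds 0) := by
            simpa using hψt.abs
          exact habs.eventually_lt_const hpos4
        filter_upwards [hψp, he4, ht4] with n hp he4' ht4'
        intro _
        have hsplit : g + d n - tt n = g + pp n + ee n - tt n := by
          simp only [hpp]; abel
        have hval : ψ (g + d n - tt n) = ψ g + ψ (pp n) + ψ (ee n) - ψ (tt n) := by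
          rw [hsplit, map_sub, map_add, map_add]
        have h5 := abs_lt.mp he4'
        have h6 := abs_lt.mp ht4'
        rw [hval]
        linarith
      · push_neg at hsl'
        exact Filter.Eventually.of_forall fun n hcon => absurd hsl' hcon
    have hwtU : ∀ᶠ n in Filter.atTop, w + tt n ∈ U := by
      have htw : Filter.Tendsto (fun n => w + tt n) Filter.atTop (nhds w) := by
        simpa using tendsto_const_nhds.add httend
      exact htw.eventually (hUopen.eventually_mem hwU)
    filter_upwards [hψl, hwtU] with n hψn hwn
    refine ⟨F₀, ?_, x n, ?_, rfl⟩
    · rw [hF₀, Set.singleton_subset_iff, hGface]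
      exact zero_mem_closure_face S Δ' Y' hgface
    · refine Set.mem_add.mpr ⟨w + tt n, hwn, g + d n - tt n, ?_, ?_⟩
      · rw [hGface]
        refine ⟨fun b hb => ?_, hψn⟩
        simp [map_sub, map_add, hbt n b hb, hgface.1 b hb]
      · have hu : u = u₀ - sv := by rw [hsv]; abel
        have hx : x n = (w + tt n) + (g + (x n - u₀ + sv) - tt n) := by
          have h7 : w + g = u₀ - sv := by rw [hwg, hu]
          have h8 : (w + tt n) + (g + (x n - u₀ + sv) - tt n)
              = (w + g) + (x n - u₀ + sv) := by abel
          rw [h8, h7]; abel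
        simp only [hd]
        exact hx.symm
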